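/- Consider the randomized sparse Kaczmarz with averaging iteration: x₀ = x₀* = 0, and for each k, sample a tuple τ_k of η indices i.i.d. with probabilities p_i, set x_{k+1}* = x_k* − (1/η) Σ_{i∈τ_k} w_i (⟨a_i, x_k⟩ − b_i)/‖a_i‖₂² · a_i and x_{k+1} = S_λ(x_{k+1}*). Assume A x̂ = b with ∂f(x̂) ∩ Range(A^T) ≠ ∅ for f(x) = λ‖x‖₁ + ½‖x‖₂², λ > 0, and assume the coupling P W D^{-2} = (α/‖A‖_F²) I with α > 0. Then, with T = (1/(2η)) W + (α/2)(1 − 1/η) A A^T/‖A‖_F², the iterates satisfy E_k[ D_f^{x_{k+1}*}(x_{k+1}, x̂) ] ≤ D_f^{x_k*}(x_k, x̂) − (α/‖A‖_F²)(1 − σ_max(T)) ‖A x_k − b‖₂², where E_k denotes conditional expectation over τ_k. -/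

import Mathlib

open Matrix Finset

noncomputable section

/-- Euclidean dot product of two vectors. -/
def dot {n : ℕ} (x y : Fin n → ℝ) : ℝ := ∑ j, x j * y j

/-- Squared Euclidean norm of a vector. -/
def norm2Sq {n : ℕ} (x : Fin n → ℝ) : ℝ := ∑ j, x j ^ 2

/-- ℓ¹ norm of a vector. -/
def l1Norm {n : ℕ} (x : Fin n → ℝ) : ℝ := ∑ j, |x j|

/-- Squared Euclidean norm of the i-th row of a matrix. -/
def rowNormSq {m n : ℕ} (A : Matrix (Fin m) (Fin n) ℝ) (i : Fin m) : ℝ := ∑ j, A i j ^ 2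

/-- Squared Frobenius norm of a matrix. -/
def frobSq {m n : ℕ} (A : Matrix (Fin m) (Fin n) ℝ) : ℝ := ∑ i, ∑ j, A i j ^ 2

/-- Largest singular value (spectral norm) of a matrix:  sup over `x ≠ 0` of `‖Ax‖₂/‖x‖₂`. -/
def sigmaMax {m n : ℕ} (A : Matrix (Fin m) (Fin n) ℝ) : ℝ :=
  sSup {t : ℝ | ∃ x : Fin n → ℝ, x ≠ 0 ∧
    t = Real.sqrt (norm2Sq (A.mulVec x)) / Real.sqrt (norm2Sq x)}

/-- `σ̃_min(A)`: the minimum over nonzero column-submatrices `A_J` of the smallest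
singular value `σ_min(A_J) = min_{x ≠ 0, supp x ⊆ J} ‖Ax‖₂/‖x‖₂`. -/
def sigmaTildeMin {m n : ℕ} (A : Matrix (Fin m) (Fin n) ℝ) : ℝ :=
  sInf {t : ℝ | ∃ J : Finset (Fin n), (∃ i j, j ∈ J ∧ A i j ≠ 0) ∧
    ∃ x : Fin n → ℝ, x ≠ 0 ∧ (∀ j ∉ J, x j = 0) ∧
      t = Real.sqrt (norm2Sq (A.mulVec x)) / Real.sqrt (norm2Sq x)}

/-- `|x|_min`: the smallest absolute value of the nonzero entries of `x`. -/
def minAbs {n : ℕ} (x : Fin n → ℝ) : ℝ := sInf {t : ℝ | ∃ j, x j ≠ 0 ∧ t = |x j|}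

/-- Componentwise soft shrinkage operator `S_λ(x) = max{|x| - λ, 0}·sign(x)`. -/
def softShrink {n : ℕ} (lam : ℝ) (x : Fin n → ℝ) : Fin n → ℝ :=
  fun j => Real.sign (x j) * max (|x j| - lam) 0

/-- The objective `f(x) = λ‖x‖₁ + ½‖x‖₂²`. -/
def fObj {n : ℕ} (lam : ℝ) (x : Fin n → ℝ) : ℝ := lam * l1Norm x + norm2Sq x / 2

/-- `g` is a subgradient of `f` at `x`. -/
def IsSubgrad {n : ℕ} (f : (Fin n → ℝ) → ℝ) (x g : Fin n → ℝ) : Prop :=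
  ∀ y, f x + dot g (y - x) ≤ f y

/-- Bregman distance `D_f^{x*}(x, y) = f(y) - f(x) - ⟨x*, y - x⟩`. -/
def breg {n : ℕ} (f : (Fin n → ℝ) → ℝ) (xstar x y : Fin n → ℝ) : ℝ :=
  f y - f x - dot xstar (y - x)

/-- One step of the randomized sparse Kaczmarz method with averaging (RSKA) on the dual
variable: `x* ← x* − (1/η) Σ_{i∈τ} w_i (⟨a_i, S_λ(x*)⟩ − b_i)/‖a_i‖₂² · a_i`. -/
def rskaStep {m n : ℕ} (A : Matrix (Fin m) (Fin n) ℝ) (b : Fin m → ℝ) (lam : ℝ)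
    (w : Fin m → ℝ) (η : ℕ) (xstar : Fin n → ℝ) (τ : Fin η → Fin m) : Fin n → ℝ :=
  xstar - (η : ℝ)⁻¹ •
    ∑ t, ((w (τ t) * (dot (A (τ t)) (softShrink lam xstar) - b (τ t))) / rowNormSq A (τ t))
      • A (τ t)

/-! ### scalar soft-shrinkage lemmas -/

def sc (lam t : ℝ) : ℝ := Real.sign t * max (|t| - lam) 0

lemma sc_eq_clamp {lam : ℝ} (hlam : 0 ≤ lam) (t : ℝ) :
    sc lam t = t - max (-lam) (min lam t) := by
  rcases lt_trichotomy t 0 with h | h | h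
  · rw [sc, Real.sign_of_neg h, abs_of_neg h]
    rcases le_or_gt t (-lam) with h2 | h2
    · rw [min_eq_right (by linarith), max_eq_left h2, max_eq_left (by linarith)]; ring
    · rw [min_eq_right (by linarith), max_eq_right h2.le, max_eq_right (by linarith)]; ring
  · subst h; rw [sc]; simp [min_eq_right hlam, max_eq_right (neg_nonpos.mpr hlam)]
  · rw [sc, Real.sign_of_pos h, abs_of_pos h]
    rcases le_or_gt lam t with h2 | h2
    · rw [min_eq_left h2, max_eq_left (by linarith), max_eq_right (by linarith)]; ring
    · rw [min_eq_right h2.le, max_eq_right (by linarith), max_eq_right (by linarith)]; ring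

lemma clamp_mem {lam : ℝ} (hlam : 0 ≤ lam) (t : ℝ) :
    -lam ≤ max (-lam) (min lam t) ∧ max (-lam) (min lam t) ≤ lam := by
  constructor
  · exact le_max_left _ _
  · rcases le_total lam t with h | h
    · rw [min_eq_left h, max_eq_right (by linarith)]
    · rcases le_total t (-lam) with h2 | h2
      · rw [min_eq_right (by linarith), max_eq_left h2]; linarith
      · rw [min_eq_right h, max_eq_right h2]; linarith

lemma sc_idA {lam : ℝ} (hlam : 0 ≤ lam) (u : ℝ) :
    u * sc lam u = lam * |sc lam u| + sc lam u ^ 2 := by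
  rw [sc_eq_clamp hlam]
  rcases le_or_gt lam u with h | h
  · rw [min_eq_left h, max_eq_right (by linarith), abs_of_nonneg (by linarith)]; ring
  · rcases le_or_gt u (-lam) with h2 | h2
    · rw [min_eq_right (by linarith), max_eq_left h2, abs_of_nonpos (by linarith)]; ring
    · rw [min_eq_right h.le, max_eq_right h2.le]; simp

lemma sc_idB {lam : ℝ} (hlam : 0 ≤ lam) (u v : ℝ) :
    sc lam v ^ 2 ≤ (sc lam u + v - u) ^ 2 := by
  rw [sc_eq_clamp hlam u, sc_eq_clamp hlam v]
  obtain ⟨hcu1, hcu2⟩ := clamp_mem hlam u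
  set cu := max (-lam) (min lam u)
  have key : ∀ s, -lam ≤ s → s ≤ lam → (v - max (-lam) (min lam v)) ^ 2 ≤ (v - s) ^ 2 := by
    intro s hs1 hs2
    rcases le_or_gt lam v with h | h
    · rw [min_eq_left h, max_eq_right (by linarith)]; nlinarith
    · rcases le_or_gt v (-lam) with h2 | h2
      · rw [min_eq_right (by linarith), max_eq_left h2]; nlinarith
      · rw [min_eq_right h.le, max_eq_right h2.le]; nlinarith
  calc (v - max (-lam) (min lam v)) ^ 2 ≤ (v - cu) ^ 2 := key cu hcu1 hcu2
    _ = (u - cu + v - u) ^ 2 := by ring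

/-! ### vector Bregman descent lemma -/

def psi (lam v xh : ℝ) : ℝ :=
  lam * |xh| + xh ^ 2 / 2 - (lam * |sc lam v| + sc lam v ^ 2 / 2) - v * (xh - sc lam v)

lemma breg_eq {n : ℕ} (lam : ℝ) (v xh : Fin n → ℝ) :
    breg (fObj lam) v (softShrink lam v) xh = ∑ j, psi lam (v j) (xh j) := by
  simp only [breg, fObj, l1Norm, norm2Sq, dot, Pi.sub_apply, softShrink, psi, sc,
    Finset.mul_sum, Finset.sum_div, ← Finset.sum_sub_distrib, ← Finset.sum_add_distrib]

lemma scalar_descent {lam : ℝ} (hlam : 0 ≤ lam) (u v xh : ℝ) :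
    psi lam v xh ≤ psi lam u xh + (v - u) * (sc lam u - xh) + (v - u) ^ 2 / 2 := by
  have hA := sc_idA hlam u
  have hB := sc_idA hlam v
  have hC := sc_idB hlam u v
  simp only [psi]
  nlinarith [hA, hB, hC]

lemma breg_step {n : ℕ} {lam : ℝ} (hlam : 0 ≤ lam) (u v xh : Fin n → ℝ) :
    breg (fObj lam) v (softShrink lam v) xh
      ≤ breg (fObj lam) u (softShrink lam u) xh
        + dot (v - u) (softShrink lam u - xh) + norm2Sq (v - u) / 2 := by
  rw [breg_eq, breg_eq]
  have h2 : dot (v - u) (softShrink lam u - xh) + norm2Sq (v - u) / 2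
      = ∑ j, ((v j - u j) * (sc lam (u j) - xh j) + (v j - u j) ^ 2 / 2) := by
    simp only [dot, norm2Sq, Pi.sub_apply, softShrink, sc, Finset.sum_div,
      ← Finset.sum_add_distrib]
  rw [add_assoc, h2, ← Finset.sum_add_distrib]
  exact Finset.sum_le_sum fun j _ =>
    le_trans (scalar_descent hlam (u j) (v j) (xh j)) (le_of_eq (add_assoc _ _ _))

/-! ### spectral norm bound -/

lemma frobSq_nonneg {m n : ℕ} (A : Matrix (Fin m) (Fin n) ℝ) : 0 ≤ frobSq A :=
  Finset.sum_nonneg fun _ _ => Finset.sum_nonneg fun _ _ => sq_nonneg _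

lemma norm2Sq_nonneg {n : ℕ} (x : Fin n → ℝ) : 0 ≤ norm2Sq x :=
  Finset.sum_nonneg fun _ _ => sq_nonneg _

lemma norm2Sq_pos {n : ℕ} {x : Fin n → ℝ} (hx : x ≠ 0) : 0 < norm2Sq x := by
  obtain ⟨j, hj⟩ : ∃ j, x j ≠ 0 := by
    by_contra h; push_neg at h; exact hx (funext h)
  exact Finset.sum_pos' (fun _ _ => sq_nonneg _) ⟨j, Finset.mem_univ j,
    pow_two_pos_of_ne_zero hj⟩

lemma mulVec_norm2Sq_le {m n : ℕ} (M : Matrix (Fin m) (Fin n) ℝ) (x : Fin n → ℝ) :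
    norm2Sq (M.mulVec x) ≤ frobSq M * norm2Sq x := by
  simp only [norm2Sq, frobSq, Matrix.mulVec, dotProduct, Finset.sum_mul]
  exact Finset.sum_le_sum fun i _ => by
    simpa [Finset.sum_mul] using Finset.sum_mul_sq_le_sq_mul_sq Finset.univ (M i) x

lemma elem_le {m n : ℕ} (M : Matrix (Fin m) (Fin n) ℝ) {x : Fin n → ℝ} (hx : x ≠ 0) :
    Real.sqrt (norm2Sq (M.mulVec x)) / Real.sqrt (norm2Sq x) ≤ Real.sqrt (frobSq M) := by
  have hq : 0 < Real.sqrt (norm2Sq x) := Real.sqrt_pos.mpr (norm2Sq_pos hx)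
  rw [div_le_iff₀ hq, ← Real.sqrt_mul (frobSq_nonneg M)]
  exact Real.sqrt_le_sqrt (mulVec_norm2Sq_le M x)

lemma quad_form_le {m : ℕ} (M : Matrix (Fin m) (Fin m) ℝ) (r : Fin m → ℝ) :
    dot r (M.mulVec r) ≤ sigmaMax M * norm2Sq r := by
  rcases eq_or_ne r 0 with h | h
  · subst h; simp [dot, norm2Sq]
  · have hr : 0 < norm2Sq r := norm2Sq_pos h
    have hsq : 0 < Real.sqrt (norm2Sq r) := Real.sqrt_pos.mpr hr
    have hb : BddAbove {t : ℝ | ∃ x : Fin m → ℝ, x ≠ 0 ∧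
        t = Real.sqrt (norm2Sq (M.mulVec x)) / Real.sqrt (norm2Sq x)} := by
      refine ⟨Real.sqrt (frobSq M), ?_⟩
      rintro t ⟨x, hx, rfl⟩
      exact elem_le M hx
    have hle : Real.sqrt (norm2Sq (M.mulVec r)) / Real.sqrt (norm2Sq r) ≤ sigmaMax M :=
      le_csSup hb ⟨r, h, rfl⟩
    have hcs : dot r (M.mulVec r)
        ≤ Real.sqrt (norm2Sq r) * Real.sqrt (norm2Sq (M.mulVec r)) := by
      have h2 := Finset.sum_mul_sq_le_sq_mul_sq Finset.univ r (M.mulVec r)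
      calc dot r (M.mulVec r) ≤ |dot r (M.mulVec r)| := le_abs_self _
        _ = Real.sqrt (dot r (M.mulVec r) ^ 2) := (Real.sqrt_sq_eq_abs _).symm
        _ ≤ Real.sqrt (norm2Sq r * norm2Sq (M.mulVec r)) := Real.sqrt_le_sqrt h2
        _ = _ := Real.sqrt_mul (norm2Sq_nonneg r) _
    have hms : Real.sqrt (norm2Sq r) * Real.sqrt (norm2Sq r) = norm2Sq r :=
      Real.mul_self_sqrt hr.le
    calc dot r (M.mulVec r) ≤ Real.sqrt (norm2Sq r) * Real.sqrt (norm2Sq (M.mulVec r)) := hcs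
      _ = (Real.sqrt (norm2Sq (M.mulVec r)) / Real.sqrt (norm2Sq r)) * norm2Sq r := by
          field_simp; linear_combination Real.sqrt (norm2Sq (M.mulVec r)) * hms
      _ ≤ sigmaMax M * norm2Sq r := mul_le_mul_of_nonneg_right hle hr.le

/-! ### expectation machinery -/

lemma sum_tuple_prod {η m : ℕ} (f : Fin η → Fin m → ℝ) :
    ∑ τ : Fin η → Fin m, ∏ t, f t (τ t) = ∏ t, ∑ i, f t i :=
  (Fintype.prod_sum f).symm

lemma exp_one {η m : ℕ} (p : Fin m → ℝ) (hp1 : ∑ i, p i = 1) (g : Fin m → ℝ) (s : Fin η) :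
    ∑ τ : Fin η → Fin m, (∏ t, p (τ t)) * g (τ s) = ∑ i, p i * g i := by
  have h1 : ∀ τ : Fin η → Fin m, (∏ t, p (τ t)) * g (τ s)
      = ∏ t, (p (τ t) * (if t = s then g (τ t) else 1)) := by
    intro τ
    rw [Finset.prod_mul_distrib, Finset.prod_ite_eq' Finset.univ s (fun t => g (τ t))]
    simp
  rw [Finset.sum_congr rfl fun τ _ => h1 τ,
    sum_tuple_prod (fun t i => p i * (if t = s then g i else 1))]
  have h2 : ∀ t : Fin η, (∑ i, p i * (if t = s then g i else 1))
      = if t = s then ∑ i, p i * g i else 1 := by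
    intro t; split_ifs with h <;> simp [hp1]
  rw [Finset.prod_congr rfl fun t _ => h2 t,
    Finset.prod_ite_eq' Finset.univ s (fun _ => ∑ i, p i * g i)]
  simp

lemma exp_two {η m : ℕ} (p : Fin m → ℝ) (hp1 : ∑ i, p i = 1) (g h : Fin m → ℝ) {s t : Fin η}
    (hst : s ≠ t) :
    ∑ τ : Fin η → Fin m, (∏ u, p (τ u)) * (g (τ s) * h (τ t))
      = (∑ i, p i * g i) * (∑ i, p i * h i) := by
  have h1 : ∀ τ : Fin η → Fin m, (∏ u, p (τ u)) * (g (τ s) * h (τ t))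
      = ∏ u, (p (τ u) * ((if u = s then g (τ u) else 1) * (if u = t then h (τ u) else 1))) := by
    intro τ
    rw [Finset.prod_mul_distrib, Finset.prod_mul_distrib,
      Finset.prod_ite_eq' Finset.univ s (fun u => g (τ u)),
      Finset.prod_ite_eq' Finset.univ t (fun u => h (τ u))]
    simp
  rw [Finset.sum_congr rfl fun τ _ => h1 τ,
    sum_tuple_prod (fun u i => p i * ((if u = s then g i else 1) * (if u = t then h i else 1)))]
  have h2 : ∀ u : Fin η, (∑ i, p i * ((if u = s then g i else 1) * (if u = t then h i else 1)))
      = (if u = s then ∑ i, p i * g i else 1) * (if u = t then ∑ i, p i * h i else 1) := by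
    intro u
    rcases eq_or_ne u s with rfl | hu
    · simp [hst]
    · rcases eq_or_ne u t with rfl | hv
      · simp [hu]
      · simp [hu, hv, hp1]
  rw [Finset.prod_congr rfl fun u _ => h2 u, Finset.prod_mul_distrib,
    Finset.prod_ite_eq' Finset.univ s (fun _ => ∑ i, p i * g i),
    Finset.prod_ite_eq' Finset.univ t (fun _ => ∑ i, p i * h i)]
  simp

lemma exp_sum_one {η m : ℕ} (p : Fin m → ℝ) (hp1 : ∑ i, p i = 1) (g : Fin m → ℝ) :
    ∑ τ : Fin η → Fin m, (∏ t, p (τ t)) * (∑ t, g (τ t)) = (η : ℝ) * ∑ i, p i * g i := by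
  calc ∑ τ : Fin η → Fin m, (∏ t, p (τ t)) * (∑ t, g (τ t))
      = ∑ τ : Fin η → Fin m, ∑ s, (∏ t, p (τ t)) * g (τ s) :=
        Finset.sum_congr rfl fun τ _ => Finset.mul_sum _ _ _
    _ = ∑ s : Fin η, ∑ τ : Fin η → Fin m, (∏ t, p (τ t)) * g (τ s) := Finset.sum_comm
    _ = ∑ _s : Fin η, ∑ i, p i * g i :=
        Finset.sum_congr rfl fun s _ => exp_one p hp1 g s
    _ = (η : ℝ) * ∑ i, p i * g i := by
        rw [Finset.sum_const, Finset.card_univ, Fintype.card_fin, nsmul_eq_mul]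

lemma sum_ite_const {η : ℕ} (s : Fin η) (a c : ℝ) :
    (∑ t : Fin η, if t = s then a else c) = a + ((η : ℝ) - 1) * c := by
  have hη : 0 < η := s.pos
  rw [← Finset.add_sum_erase Finset.univ _ (Finset.mem_univ s), if_pos rfl]
  congr 1
  rw [Finset.sum_congr rfl fun t ht => if_neg (Finset.ne_of_mem_erase ht),
    Finset.sum_const, Finset.card_erase_of_mem (Finset.mem_univ s), Finset.card_univ,
    Fintype.card_fin, nsmul_eq_mul, Nat.cast_sub hη]
  push_cast; ring

lemma exp_sum_pair {η m : ℕ} (p : Fin m → ℝ) (hp1 : ∑ i, p i = 1) {N : ℕ}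
    (q : Fin m → Fin N → ℝ) :
    ∑ τ : Fin η → Fin m, (∏ u, p (τ u)) * (∑ s : Fin η, ∑ t : Fin η, ∑ j, q (τ s) j * q (τ t) j)
      = (η : ℝ) * (∑ i, p i * (∑ j, q i j ^ 2))
        + (η : ℝ) * ((η : ℝ) - 1) * ∑ j, (∑ i, p i * q i j) ^ 2 := by
  have hterm : ∀ s t : Fin η,
      (∑ τ : Fin η → Fin m, (∏ u, p (τ u)) * (∑ j, q (τ s) j * q (τ t) j))
        = if t = s then (∑ i, p i * (∑ j, q i j ^ 2)) else ∑ j, (∑ i, p i * q i j) ^ 2 := by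
    intro s t
    rcases eq_or_ne t s with rfl | ht
    · rw [if_pos rfl]
      have h1 : ∀ τ : Fin η → Fin m, (∏ u, p (τ u)) * (∑ j, q (τ t) j * q (τ t) j)
          = (∏ u, p (τ u)) * (∑ j, q (τ t) j ^ 2) := by
        intro τ; congr 1; exact Finset.sum_congr rfl fun j _ => (sq (q (τ t) j)).symm
      rw [Finset.sum_congr rfl fun τ _ => h1 τ]
      exact exp_one p hp1 (fun i => ∑ j, q i j ^ 2) t
    · rw [if_neg ht]
      calc ∑ τ : Fin η → Fin m, (∏ u, p (τ u)) * (∑ j, q (τ s) j * q (τ t) j)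
          = ∑ τ : Fin η → Fin m, ∑ j, (∏ u, p (τ u)) * (q (τ s) j * q (τ t) j) :=
            Finset.sum_congr rfl fun τ _ => Finset.mul_sum _ _ _
        _ = ∑ j, ∑ τ : Fin η → Fin m, (∏ u, p (τ u)) * (q (τ s) j * q (τ t) j) :=
            Finset.sum_comm
        _ = ∑ j, (∑ i, p i * q i j) ^ 2 := Finset.sum_congr rfl fun j _ => by
            rw [exp_two p hp1 (fun i => q i j) (fun i => q i j) (Ne.symm ht), sq]
  calc ∑ τ : Fin η → Fin m, (∏ u, p (τ u)) * (∑ s : Fin η, ∑ t : Fin η, ∑ j, q (τ s) j * q (τ t) j)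
      = ∑ τ : Fin η → Fin m, ∑ s : Fin η, ∑ t : Fin η,
          (∏ u, p (τ u)) * (∑ j, q (τ s) j * q (τ t) j) := by
        refine Finset.sum_congr rfl fun τ _ => ?_
        rw [Finset.mul_sum]
        exact Finset.sum_congr rfl fun s _ => Finset.mul_sum _ _ _
    _ = ∑ s : Fin η, ∑ τ : Fin η → Fin m, ∑ t : Fin η,
          (∏ u, p (τ u)) * (∑ j, q (τ s) j * q (τ t) j) := Finset.sum_comm
    _ = ∑ s : Fin η, ∑ t : Fin η, ∑ τ : Fin η → Fin m,
          (∏ u, p (τ u)) * (∑ j, q (τ s) j * q (τ t) j) :=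
        Finset.sum_congr rfl fun s _ => Finset.sum_comm
    _ = ∑ s : Fin η, ∑ t : Fin η,
          (if t = s then (∑ i, p i * (∑ j, q i j ^ 2)) else ∑ j, (∑ i, p i * q i j) ^ 2) :=
        Finset.sum_congr rfl fun s _ => Finset.sum_congr rfl fun t _ => hterm s t
    _ = ∑ _s : Fin η, ((∑ i, p i * (∑ j, q i j ^ 2))
          + ((η : ℝ) - 1) * ∑ j, (∑ i, p i * q i j) ^ 2) :=
        Finset.sum_congr rfl fun s _ => sum_ite_const s _ _
    _ = _ := by
        rw [Finset.sum_const, Finset.card_univ, Fintype.card_fin, nsmul_eq_mul]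
        ring


/-- (Expected one-step Bregman decrease for RSKA.) Under the coupling
`P W D⁻² = (α/‖A‖_F²) I`, with `T = (1/(2η)) W + (α/2)(1 − 1/η) A Aᵀ/‖A‖_F²`, the conditional
expectation over the tuple `τ_k` satisfies
`E_k[D_f^{x_{k+1}*}(x_{k+1}, x̂)] ≤ D_f^{x_k*}(x_k, x̂) − (α/‖A‖_F²)(1 − σ_max(T))‖A x_k − b‖₂²`. -/
theorem rska_one_step_decrease {m n η : ℕ} (hη : 0 < η)
    (A : Matrix (Fin m) (Fin n) ℝ) (hA : ∀ i, A i ≠ 0)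
    (b : Fin m → ℝ) (lam : ℝ) (hlam : 0 < lam)
    (w p : Fin m → ℝ) (hp0 : ∀ i, 0 ≤ p i) (hp1 : ∑ i, p i = 1)
    (α : ℝ) (hα : 0 < α)
    (hcoup : ∀ i, p i * w i / rowNormSq A i = α / frobSq A)
    (xhat : Fin n → ℝ) (hxhat : A.mulVec xhat = b)
    (hrange : ∃ y : Fin m → ℝ, IsSubgrad (fObj lam) xhat (Aᵀ.mulVec y))
    (xkstar : Fin n → ℝ) :
    ∑ τ : Fin η → Fin m, (∏ t, p (τ t)) *
        breg (fObj lam) (rskaStep A b lam w η xkstar τ)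
          (softShrink lam (rskaStep A b lam w η xkstar τ)) xhat
      ≤ breg (fObj lam) xkstar (softShrink lam xkstar) xhat
        - α / frobSq A *
            (1 - sigmaMax ((2 * (η : ℝ))⁻¹ • Matrix.diagonal w
              + (α / 2 * (1 - (η : ℝ)⁻¹) / frobSq A) • (A * Aᵀ)))
          * norm2Sq (A.mulVec (softShrink lam xkstar) - b) := by
  classical
  have hηR : ((η : ℝ)) ≠ 0 := Nat.cast_ne_zero.mpr hη.ne'
  have hm : 0 < m := by
    rcases Nat.eq_zero_or_pos m with h | h
    · exfalso; subst h; simp at hp1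
    · exact h
  have hRn : ∀ i, 0 < rowNormSq A i := fun i => norm2Sq_pos (hA i)
  have hF : 0 < frobSq A := by
    have h : frobSq A = ∑ i, rowNormSq A i := rfl
    rw [h]
    exact Finset.sum_pos (fun i _ => hRn i) ⟨⟨0, hm⟩, Finset.mem_univ _⟩
  set X := softShrink lam xkstar with hX
  set T := (2 * (η : ℝ))⁻¹ • Matrix.diagonal w
      + (α / 2 * (1 - (η : ℝ)⁻¹) / frobSq A) • (A * Aᵀ) with hT
  set Dk := breg (fObj lam) xkstar X xhat with hDk
  set rv : Fin m → ℝ := fun i => dot (A i) X - b i with hrvdef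
  set cc : Fin m → ℝ := fun i => w i * (dot (A i) X - b i) / rowNormSq A i with hccdef
  set q : Fin m → Fin n → ℝ := fun i j => cc i * A i j with hqdef
  -- basic row facts
  have hAxh : ∀ i, dot (A i) xhat = b i := by
    intro i
    have h := congrFun hxhat i
    simpa [Matrix.mulVec, dotProduct, dot] using h
  have hAmul : A.mulVec X - b = rv := by
    funext i
    show A.mulVec X i - b i = dot (A i) X - b i
    simp [Matrix.mulVec, dotProduct, dot]
  -- the dual increment, componentwise
  have hd : ∀ (τ : Fin η → Fin m) (j : Fin n),
      (rskaStep A b lam w η xkstar τ - xkstar) j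
        = -((η : ℝ)⁻¹ * ∑ t, cc (τ t) * A (τ t) j) := by
    intro τ j
    show xkstar j - ((η : ℝ)⁻¹ • ∑ t, ((w (τ t) * (dot (A (τ t)) X - b (τ t)))
        / rowNormSq A (τ t)) • A (τ t)) j - xkstar j = _
    rw [Pi.smul_apply, Finset.sum_apply]
    simp only [Pi.smul_apply, smul_eq_mul]
    have : ∀ t : Fin η, (w (τ t) * (dot (A (τ t)) X - b (τ t))) / rowNormSq A (τ t) = cc (τ t) :=
      fun t => rfl
    rw [Finset.sum_congr rfl fun t _ => by rw [this t]]
    ring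
  have hXsub : ∀ i, dot (A i) (X - xhat) = rv i := by
    intro i
    show dot (A i) (X - xhat) = dot (A i) X - b i
    rw [← hAxh i]
    simp [dot, Pi.sub_apply, mul_sub, Finset.sum_sub_distrib]
  -- the linear term
  have hGdot : ∀ τ : Fin η → Fin m,
      dot (rskaStep A b lam w η xkstar τ - xkstar) (X - xhat)
        = -(η : ℝ)⁻¹ * ∑ t, cc (τ t) * rv (τ t) := by
    intro τ
    calc dot (rskaStep A b lam w η xkstar τ - xkstar) (X - xhat)
        = ∑ j, -((η : ℝ)⁻¹ * ∑ t, cc (τ t) * A (τ t) j) * (X j - xhat j) :=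
          Finset.sum_congr rfl fun j _ => by rw [hd τ j]; rfl
      _ = -(η : ℝ)⁻¹ * ∑ j, (∑ t, cc (τ t) * A (τ t) j) * (X j - xhat j) := by
          rw [Finset.mul_sum]
          exact Finset.sum_congr rfl fun j _ => by ring
      _ = -(η : ℝ)⁻¹ * ∑ t, cc (τ t) * ∑ j, A (τ t) j * (X j - xhat j) := by
          congr 1
          calc ∑ j, (∑ t, cc (τ t) * A (τ t) j) * (X j - xhat j)
              = ∑ j, ∑ t, cc (τ t) * (A (τ t) j * (X j - xhat j)) := by
                refine Finset.sum_congr rfl fun j _ => ?_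
                rw [Finset.sum_mul]
                exact Finset.sum_congr rfl fun t _ => by ring
            _ = ∑ t, ∑ j, cc (τ t) * (A (τ t) j * (X j - xhat j)) := Finset.sum_comm
            _ = ∑ t, cc (τ t) * ∑ j, A (τ t) j * (X j - xhat j) :=
                Finset.sum_congr rfl fun t _ => (Finset.mul_sum _ _ _).symm
      _ = -(η : ℝ)⁻¹ * ∑ t, cc (τ t) * rv (τ t) := by
          congr 1
          refine Finset.sum_congr rfl fun t _ => ?_
          rw [show (∑ j, A (τ t) j * (X j - xhat j)) = dot (A (τ t)) (X - xhat) from rfl,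
            hXsub (τ t)]
  -- the quadratic term
  have hGq : ∀ τ : Fin η → Fin m,
      norm2Sq (rskaStep A b lam w η xkstar τ - xkstar)
        = (η : ℝ)⁻¹ ^ 2 * ∑ s : Fin η, ∑ t : Fin η, ∑ j, q (τ s) j * q (τ t) j := by
    intro τ
    calc norm2Sq (rskaStep A b lam w η xkstar τ - xkstar)
        = ∑ j, ((η : ℝ)⁻¹ * ∑ t, cc (τ t) * A (τ t) j) ^ 2 :=
          Finset.sum_congr rfl fun j _ => by rw [hd τ j]; ring
      _ = (η : ℝ)⁻¹ ^ 2 * ∑ j, (∑ t, cc (τ t) * A (τ t) j) ^ 2 := by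
          rw [Finset.mul_sum]
          exact Finset.sum_congr rfl fun j _ => by ring
      _ = (η : ℝ)⁻¹ ^ 2 * ∑ j, ∑ s : Fin η, ∑ t : Fin η,
            (cc (τ s) * A (τ s) j) * (cc (τ t) * A (τ t) j) := by
          congr 1
          exact Finset.sum_congr rfl fun j _ => by rw [sq, Finset.sum_mul_sum]
      _ = (η : ℝ)⁻¹ ^ 2 * ∑ s : Fin η, ∑ t : Fin η, ∑ j, q (τ s) j * q (τ t) j := by
          congr 1
          calc ∑ j, ∑ s : Fin η, ∑ t : Fin η, (cc (τ s) * A (τ s) j) * (cc (τ t) * A (τ t) j)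
              = ∑ s : Fin η, ∑ j, ∑ t : Fin η, (cc (τ s) * A (τ s) j) * (cc (τ t) * A (τ t) j) :=
                Finset.sum_comm
            _ = ∑ s : Fin η, ∑ t : Fin η, ∑ j,
                  (cc (τ s) * A (τ s) j) * (cc (τ t) * A (τ t) j) :=
                Finset.sum_congr rfl fun s _ => Finset.sum_comm
            _ = ∑ s : Fin η, ∑ t : Fin η, ∑ j, q (τ s) j * q (τ t) j := rfl
  -- expectation identities
  have hE0 : ∑ τ : Fin η → Fin m, (∏ t, p (τ t)) = 1 := by
    have h := sum_tuple_prod (fun (_ : Fin η) (i : Fin m) => p i)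
    simpa [hp1] using h
  have hkey : ∑ τ : Fin η → Fin m, (∏ t, p (τ t)) *
        (Dk + dot (rskaStep A b lam w η xkstar τ - xkstar) (X - xhat)
          + norm2Sq (rskaStep A b lam w η xkstar τ - xkstar) / 2)
      = Dk + (-(η : ℝ)⁻¹) * ((η : ℝ) * ∑ i, p i * (cc i * rv i))
        + ((η : ℝ)⁻¹ ^ 2 / 2) * ((η : ℝ) * (∑ i, p i * (∑ j, q i j ^ 2))
            + (η : ℝ) * ((η : ℝ) - 1) * ∑ j, (∑ i, p i * q i j) ^ 2) := by
    have expand : ∀ τ : Fin η → Fin m, (∏ t, p (τ t)) *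
        (Dk + dot (rskaStep A b lam w η xkstar τ - xkstar) (X - xhat)
          + norm2Sq (rskaStep A b lam w η xkstar τ - xkstar) / 2)
        = (∏ t, p (τ t)) * Dk
          + (-(η : ℝ)⁻¹) * ((∏ t, p (τ t)) * (∑ t, cc (τ t) * rv (τ t)))
          + ((η : ℝ)⁻¹ ^ 2 / 2) * ((∏ t, p (τ t)) *
              (∑ s : Fin η, ∑ t : Fin η, ∑ j, q (τ s) j * q (τ t) j)) := by
      intro τ
      rw [hGdot τ, hGq τ]
      ring
    rw [Finset.sum_congr rfl fun τ _ => expand τ, Finset.sum_add_distrib,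
      Finset.sum_add_distrib, ← Finset.sum_mul, hE0, one_mul, ← Finset.mul_sum,
      ← Finset.mul_sum,
      show (∑ τ : Fin η → Fin m, (∏ t, p (τ t)) * (∑ t, cc (τ t) * rv (τ t)))
        = (η : ℝ) * ∑ i, p i * (cc i * rv i) from exp_sum_one p hp1 (fun i => cc i * rv i),
      show (∑ τ : Fin η → Fin m, (∏ t, p (τ t)) *
            (∑ s : Fin η, ∑ t : Fin η, ∑ j, q (τ s) j * q (τ t) j))
        = (η : ℝ) * (∑ i, p i * (∑ j, q i j ^ 2))
          + (η : ℝ) * ((η : ℝ) - 1) * ∑ j, (∑ i, p i * q i j) ^ 2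
        from exp_sum_pair p hp1 q]
  -- coupling identities
  have hpcc : ∀ i, p i * cc i = α / frobSq A * rv i := by
    intro i
    show p i * (w i * (dot (A i) X - b i) / rowNormSq A i)
      = α / frobSq A * (dot (A i) X - b i)
    have h := hcoup i
    field_simp [(hRn i).ne'] at h ⊢
    linear_combination (dot (A i) X - b i) * h
  have hSpcr : ∑ i, p i * (cc i * rv i) = α / frobSq A * ∑ i, rv i ^ 2 := by
    rw [Finset.mul_sum]
    refine Finset.sum_congr rfl fun i _ => ?_
    linear_combination rv i * hpcc i
  have hSA : ∑ i, p i * (∑ j, q i j ^ 2) = α / frobSq A * ∑ i, w i * rv i ^ 2 := by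
    rw [Finset.mul_sum]
    refine Finset.sum_congr rfl fun i _ => ?_
    have hq2 : (∑ j, q i j ^ 2) = cc i ^ 2 * rowNormSq A i := by
      show (∑ j, (cc i * A i j) ^ 2) = cc i ^ 2 * rowNormSq A i
      rw [show rowNormSq A i = ∑ j, A i j ^ 2 from rfl, Finset.mul_sum]
      exact Finset.sum_congr rfl fun j _ => by ring
    rw [hq2]
    show p i * ((w i * (dot (A i) X - b i) / rowNormSq A i) ^ 2 * rowNormSq A i)
      = α / frobSq A * (w i * (dot (A i) X - b i) ^ 2)
    have h := hcoup i
    field_simp [(hRn i).ne', hF.ne'] at h ⊢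
    linear_combination (w i * (dot (A i) X - b i) ^ 2) * h
  have hSB : ∑ j, (∑ i, p i * q i j) ^ 2
      = (α / frobSq A) ^ 2 * ∑ j, (∑ i, rv i * A i j) ^ 2 := by
    rw [Finset.mul_sum]
    refine Finset.sum_congr rfl fun j _ => ?_
    have h1 : (∑ i, p i * q i j) = α / frobSq A * ∑ i, rv i * A i j := by
      rw [Finset.mul_sum]
      refine Finset.sum_congr rfl fun i _ => ?_
      show p i * (cc i * A i j) = α / frobSq A * (rv i * A i j)
      linear_combination (A i j) * hpcc i
    rw [h1]; ring
  -- the quadratic form of T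
  have hAAT : ∑ i, rv i * ((A * Aᵀ).mulVec rv i) = ∑ j, (∑ i, rv i * A i j) ^ 2 := by
    calc ∑ i, rv i * ((A * Aᵀ).mulVec rv i)
        = ∑ i, ∑ k, ∑ j, rv i * A i j * (A k j * rv k) := by
          refine Finset.sum_congr rfl fun i _ => ?_
          rw [show (A * Aᵀ).mulVec rv i = ∑ k, (∑ j, A i j * A k j) * rv k from by
            simp [Matrix.mulVec, dotProduct, Matrix.mul_apply, Matrix.transpose_apply]]
          rw [Finset.mul_sum]
          refine Finset.sum_congr rfl fun k _ => ?_
          rw [Finset.sum_mul, Finset.mul_sum]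
          exact Finset.sum_congr rfl fun j _ => by ring
      _ = ∑ i, ∑ j, ∑ k, rv i * A i j * (A k j * rv k) :=
          Finset.sum_congr rfl fun i _ => Finset.sum_comm
      _ = ∑ j, ∑ i, ∑ k, rv i * A i j * (A k j * rv k) := Finset.sum_comm
      _ = ∑ j, (∑ i, rv i * A i j) ^ 2 := by
          refine Finset.sum_congr rfl fun j _ => ?_
          rw [sq, Finset.sum_mul_sum]
          exact Finset.sum_congr rfl fun i _ => Finset.sum_congr rfl fun k _ => by ring
  have hT2 : ∀ i, T.mulVec rv i = (2 * (η : ℝ))⁻¹ * (w i * rv i)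
      + (α / 2 * (1 - (η : ℝ)⁻¹) / frobSq A) * ((A * Aᵀ).mulVec rv i) := by
    intro i
    show ((2 * (η : ℝ))⁻¹ • Matrix.diagonal w
        + (α / 2 * (1 - (η : ℝ)⁻¹) / frobSq A) • (A * Aᵀ)).mulVec rv i = _
    rw [Matrix.add_mulVec, Matrix.smul_mulVec, Matrix.smul_mulVec]
    simp [Matrix.mulVec_diagonal]
  have hquad : dot rv (T.mulVec rv)
      = (2 * (η : ℝ))⁻¹ * (∑ i, w i * rv i ^ 2)
        + (α / 2 * (1 - (η : ℝ)⁻¹) / frobSq A) * ∑ j, (∑ i, rv i * A i j) ^ 2 := by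
    calc dot rv (T.mulVec rv)
        = ∑ i, ((2 * (η : ℝ))⁻¹ * (w i * rv i ^ 2)
            + (α / 2 * (1 - (η : ℝ)⁻¹) / frobSq A) * (rv i * ((A * Aᵀ).mulVec rv i))) :=
          Finset.sum_congr rfl fun i _ => by rw [hT2 i]; ring
      _ = (2 * (η : ℝ))⁻¹ * (∑ i, w i * rv i ^ 2)
            + (α / 2 * (1 - (η : ℝ)⁻¹) / frobSq A) * ∑ i, rv i * ((A * Aᵀ).mulVec rv i) := by
          rw [Finset.sum_add_distrib, Finset.mul_sum, Finset.mul_sum]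
      _ = _ := by rw [hAAT]
  -- spectral bound
  have hqle : dot rv (T.mulVec rv) ≤ sigmaMax T * ∑ i, rv i ^ 2 :=
    quad_form_le T rv
  have haF : (0 : ℝ) ≤ α / frobSq A := div_nonneg hα.le hF.le
  have hmul : α / frobSq A * dot rv (T.mulVec rv)
      ≤ α / frobSq A * (sigmaMax T * ∑ i, rv i ^ 2) :=
    mul_le_mul_of_nonneg_left hqle haF
  have hNr : norm2Sq (A.mulVec X - b) = ∑ i, rv i ^ 2 := by rw [hAmul]; rfl
  -- assemble
  calc ∑ τ : Fin η → Fin m, (∏ t, p (τ t)) *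
        breg (fObj lam) (rskaStep A b lam w η xkstar τ)
          (softShrink lam (rskaStep A b lam w η xkstar τ)) xhat
      ≤ ∑ τ : Fin η → Fin m, (∏ t, p (τ t)) *
          (Dk + dot (rskaStep A b lam w η xkstar τ - xkstar) (X - xhat)
            + norm2Sq (rskaStep A b lam w η xkstar τ - xkstar) / 2) :=
        Finset.sum_le_sum fun τ _ => mul_le_mul_of_nonneg_left
          (breg_step hlam.le xkstar (rskaStep A b lam w η xkstar τ) xhat)
          (Finset.prod_nonneg fun t _ => hp0 (τ t))
    _ = Dk + (-(η : ℝ)⁻¹) * ((η : ℝ) * ∑ i, p i * (cc i * rv i))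
          + ((η : ℝ)⁻¹ ^ 2 / 2) * ((η : ℝ) * (∑ i, p i * (∑ j, q i j ^ 2))
              + (η : ℝ) * ((η : ℝ) - 1) * ∑ j, (∑ i, p i * q i j) ^ 2) := hkey
    _ = Dk - α / frobSq A * (∑ i, rv i ^ 2) + α / frobSq A * dot rv (T.mulVec rv) := by
        rw [hSpcr, hSA, hSB, hquad]
        field_simp
        ring
    _ ≤ Dk - α / frobSq A * (∑ i, rv i ^ 2)
          + α / frobSq A * (sigmaMax T * ∑ i, rv i ^ 2) := by linarith [hmul]
    _ = Dk - α / frobSq A * (1 - sigmaMax T) * (∑ i, rv i ^ 2) := by ring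
    _ = Dk - α / frobSq A * (1 - sigmaMax T) * norm2Sq (A.mulVec X - b) := by rw [hNr]
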